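/- Let (Ω, 𝓕) be a measurable space, let ℙ be a probability measure on Ω, let λ > 0, let S : Ω → ℝ be a bounded measurable function, and set η = ∫ exp(−S(x)/λ) dℙ(x). Then η ∈ (0, ∞), the measure ℚ* defined as ℙ weighted by the density x ↦ exp(−S(x)/λ)/η (i.e., ℚ*(E) = (1/η)∫_E exp(−S/λ) dℙ) is a probability measure absolutely continuous with respect to ℙ, and it attains the Gibbs variational bound with equality: ∫ S dℚ* + λ · KL(ℚ*‖ℙ) = −λ · log η. -/

import Mathlib

open MeasureTheory

/-- The Kullback–Leibler divergence `KL(Q‖P) = ∫ log (dQ/dP) dQ` for `Q ≪ P`. -/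
noncomputable def klDiv {Ω : Type*} [MeasurableSpace Ω] (Q P : Measure Ω) : ℝ :=
  ∫ x, Real.log (Q.rnDeriv P x).toReal ∂Q

/-- The Gibbs measure `Q*` with density `exp(-S/λ)/η` w.r.t. `P` is a probability measure,
absolutely continuous w.r.t. `P`, `η ∈ (0, ∞)`, and it attains the Gibbs variational bound
with equality: `∫ S dQ* + λ·KL(Q*‖P) = -λ log η`. -/
theorem gibbs_measure_attains_bound
    {Ω : Type*} [MeasurableSpace Ω] (P : Measure Ω) [IsProbabilityMeasure P]
    (lam : ℝ) (hlam : 0 < lam)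
    (S : Ω → ℝ) (hS : Measurable S) (C : ℝ) (hbdd : ∀ x, |S x| ≤ C)
    (η : ℝ) (hη : η = ∫ x, Real.exp (-S x / lam) ∂P)
    (Qstar : Measure Ω)
    (hQstar : Qstar = P.withDensity (fun x => ENNReal.ofReal (Real.exp (-S x / lam) / η))) :
    0 < η ∧
    IsProbabilityMeasure Qstar ∧
    Qstar ≪ P ∧
    ∫ x, S x ∂Qstar + lam * klDiv Qstar P = -lam * Real.log η := by
  have hmeas_exp : Measurable fun x => Real.exp (-S x / lam) :=
    (Real.measurable_exp.comp ((hS.neg).div_const lam))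
  have hint_exp : Integrable (fun x => Real.exp (-S x / lam)) P := by
    refine (integrable_const (Real.exp (C / lam))).mono' hmeas_exp.aestronglyMeasurable ?_
    filter_upwards with x
    rw [Real.norm_eq_abs, abs_of_pos (Real.exp_pos _)]
    apply Real.exp_le_exp.2
    apply div_le_div_of_nonneg_right _ hlam.le
    have := hbdd x
    linarith [neg_abs_le (S x)]
  have hηpos : 0 < η := by
    rw [hη]
    exact integral_exp_pos hint_exp
  have hdens_meas : Measurable fun x => ENNReal.ofReal (Real.exp (-S x / lam) / η) :=
    (hmeas_exp.div_const η).ennreal_ofReal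
  have hQP : Qstar ≪ P := by
    rw [hQstar]; exact withDensity_absolutelyContinuous _ _
  have hint_div : Integrable (fun x => Real.exp (-S x / lam) / η) P := hint_exp.div_const η
  have hlint : ∫⁻ x, ENNReal.ofReal (Real.exp (-S x / lam) / η) ∂P = 1 := by
    rw [← ofReal_integral_eq_lintegral_ofReal hint_div
      (Filter.Eventually.of_forall fun x => div_nonneg (Real.exp_pos _).le hηpos.le)]
    rw [integral_div, ← hη, div_self hηpos.ne', ENNReal.ofReal_one]
  have hprob : IsProbabilityMeasure Qstar := by
    constructor
    rw [hQstar, withDensity_apply _ MeasurableSet.univ, Measure.restrict_univ, hlint]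
  -- rnDeriv equals the density a.e. [P], hence a.e. [Qstar]
  have hrn : (fun x => (Qstar.rnDeriv P x).toReal)
      =ᵐ[Qstar] fun x => Real.exp (-S x / lam) / η := by
    apply hQP.ae_le
    have h1 : Qstar.rnDeriv P =ᵐ[P] fun x => ENNReal.ofReal (Real.exp (-S x / lam) / η) := by
      rw [hQstar]
      exact Measure.rnDeriv_withDensity P hdens_meas
    filter_upwards [h1] with x hx
    simp only [hx, ENNReal.toReal_ofReal (div_nonneg (Real.exp_pos _).le hηpos.le)]
  have hlog : (fun x => Real.log (Qstar.rnDeriv P x).toReal)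
      =ᵐ[Qstar] fun x => -S x / lam - Real.log η := by
    filter_upwards [hrn] with x hx
    rw [hx, Real.log_div (Real.exp_pos _).ne' hηpos.ne', Real.log_exp]
  have hSint : Integrable S Qstar := by
    refine (integrable_const C).mono' hS.aestronglyMeasurable ?_
    filter_upwards with x
    simpa [Real.norm_eq_abs] using hbdd x
  have hkl : klDiv Qstar P = ∫ x, (-S x / lam - Real.log η) ∂Qstar := by
    exact integral_congr_ae hlog
  refine ⟨hηpos, hprob, hQP, ?_⟩
  rw [hkl]
  have : ∫ x, (-S x / lam - Real.log η) ∂Qstar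
      = (∫ x, S x ∂Qstar) * (-1 / lam) - Real.log η := by
    have hre : (fun x => -S x / lam - Real.log η)
        = fun x => S x * (-1 / lam) - Real.log η := by
      funext x; ring
    rw [hre, integral_sub (hSint.mul_const _) (integrable_const _), integral_const,
      probReal_univ, one_smul, integral_mul_const]
  rw [this]
  field_simp
  ring
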